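/- arXiv:1911.03714 — 5 statements merged into one kernel-verified Lean document; each statement's English description precedes it below -/
import Mathlib

section
/- For all t ≥ τ ≥ t₀ one has 2·ln‖Φ(t,τ)‖_I ≤ ∫_τ^t λ_max[A(s)ᵀ + A(s)] ds. -/
open scoped Matrix
open scoped Matrix.Norms.L2Operator  -- `‖·‖` on matrices is the operator norm induced by the Euclidean norm
open Set

/-- The largest (real) eigenvalue of a matrix, as the supremum of its real spectrum.
For a real symmetric matrix this is `λ_max`. -/
noncomputable def lambdaMax {n : ℕ} (M : Matrix (Fin n) (Fin n) ℝ) : ℝ :=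
  sSup (spectrum ℝ M)

namespace Wazewski

variable {n : ℕ}

lemma inner_eq_dot (u w : Fin n → ℝ) :
    (inner ℝ ((WithLp.equiv 2 (Fin n → ℝ)).symm u) ((WithLp.equiv 2 (Fin n → ℝ)).symm w) : ℝ)
      = u ⬝ᵥ w := by
  simp [PiLp.inner_apply, dotProduct, RCLike.inner_apply, mul_comm]

lemma toEuclideanLin_eigen {M : Matrix (Fin n) (Fin n) ℝ} (hM : M.IsHermitian) (j : Fin n) :
    Matrix.toEuclideanLin M (hM.eigenvectorBasis j) = hM.eigenvalues j • hM.eigenvectorBasis j := by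
  have h := hM.mulVec_eigenvectorBasis j
  apply (WithLp.equiv 2 (Fin n → ℝ)).injective
  simp only [Matrix.toEuclideanLin_apply]
  rw [WithLp.equiv_apply, WithLp.equiv_apply]
  simpa using h

lemma spectrum_eq_range_eigenvalues {M : Matrix (Fin n) (Fin n) ℝ} (hM : M.IsHermitian) :
    spectrum ℝ M = Set.range hM.eigenvalues := by
  apply Set.Subset.antisymm
  · intro μ hμ
    rw [← Matrix.spectrum_toEuclideanLin (A := M)] at hμ
    have hev : Module.End.HasEigenvalue (Matrix.toEuclideanLin M) μ :=
      Module.End.hasEigenvalue_iff_mem_spectrum.mpr hμ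
    obtain ⟨v, hv⟩ := hev.exists_hasEigenvector
    have hsym := Matrix.isHermitian_iff_isSymmetric.mp hM
    set b := hM.eigenvectorBasis with hb
    have hvne : b.repr v ≠ 0 := fun h => hv.2 (by simpa using b.repr.map_eq_zero_iff.mp (by exact h))
    obtain ⟨j, hj⟩ := Function.ne_iff.mp (fun (h : (b.repr v).ofLp = 0) => hvne (by ext i; simpa using congrFun h i))
    refine ⟨j, ?_⟩
    have h1 : (inner ℝ (Matrix.toEuclideanLin M (b j)) v : ℝ) = inner ℝ (b j) (Matrix.toEuclideanLin M v) :=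
      hsym (b j) v
    rw [toEuclideanLin_eigen hM j, hv.apply_eq_smul, real_inner_smul_left,
      real_inner_smul_right] at h1
    have h2 : (inner ℝ (b j) v : ℝ) ≠ 0 := by
      simpa [OrthonormalBasis.repr_apply_apply] using hj
    exact mul_right_cancel₀ h2 h1
  · rintro μ ⟨i, rfl⟩
    exact hM.eigenvalues_mem_spectrum_real i

end Wazewski

namespace Wazewski
variable {n : ℕ}

lemma eigenvalues_le_lambdaMax {M : Matrix (Fin n) (Fin n) ℝ} (hM : M.IsHermitian) (i : Fin n) :
    hM.eigenvalues i ≤ lambdaMax M := by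
  have h := spectrum_eq_range_eigenvalues hM
  have hfin : (spectrum ℝ M).Finite := h ▸ Set.finite_range _
  exact le_csSup hfin.bddAbove (h ▸ Set.mem_range_self i)

lemma exists_lambdaMax_eq [Nonempty (Fin n)] {M : Matrix (Fin n) (Fin n) ℝ}
    (hM : M.IsHermitian) : ∃ j, lambdaMax M = hM.eigenvalues j := by
  have h := spectrum_eq_range_eigenvalues hM
  have hfin : (spectrum ℝ M).Finite := h ▸ Set.finite_range _
  have hne : (spectrum ℝ M).Nonempty := h ▸ Set.range_nonempty _
  have : lambdaMax M ∈ spectrum ℝ M := hne.csSup_mem hfin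
  rw [h] at this
  obtain ⟨j, hj⟩ := this
  exact ⟨j, hj.symm⟩

lemma dot_self_eq (w : Fin n → ℝ) :
    w ⬝ᵥ w = ‖(WithLp.equiv 2 (Fin n → ℝ)).symm w‖ ^ 2 := by
  rw [← inner_eq_dot, real_inner_self_eq_norm_sq]

/-- Rayleigh upper bound in dot product form. -/
lemma dotProduct_le_lambdaMax [Nonempty (Fin n)] {M : Matrix (Fin n) (Fin n) ℝ}
    (hM : M.IsHermitian) (w : Fin n → ℝ) :
    (M *ᵥ w) ⬝ᵥ w ≤ lambdaMax M * (w ⬝ᵥ w) := by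
  set b := hM.eigenvectorBasis with hb
  set y : EuclideanSpace ℝ (Fin n) := (WithLp.equiv 2 (Fin n → ℝ)).symm w with hy
  have hsym := Matrix.isHermitian_iff_isSymmetric.mp hM
  have hTy : Matrix.toEuclideanLin M y = (WithLp.equiv 2 (Fin n → ℝ)).symm (M *ᵥ w) := by
    simp [Matrix.toEuclideanLin_apply, hy]
  have hrepr : ∀ j, b.repr (Matrix.toEuclideanLin M y) j = hM.eigenvalues j * b.repr y j := by
    intro j
    rw [OrthonormalBasis.repr_apply_apply, OrthonormalBasis.repr_apply_apply,
      ← hsym (b j) y, toEuclideanLin_eigen hM j, real_inner_smul_left]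
  have key : ∀ u v : EuclideanSpace ℝ (Fin n), (inner ℝ u v : ℝ) = ∑ j, b.repr u j * b.repr v j := by
    intro u v
    rw [← b.repr.inner_map_map u v, PiLp.inner_apply]
    simp only [RCLike.inner_apply, starRingEnd_apply, star_trivial]
    exact Finset.sum_congr rfl fun _ _ => mul_comm _ _
  have hinner1 : (M *ᵥ w) ⬝ᵥ w = ∑ j, hM.eigenvalues j * (b.repr y j) ^ 2 := by
    rw [← inner_eq_dot, ← hTy, key]
    exact Finset.sum_congr rfl fun j _ => by rw [hrepr]; ring
  have hinner2 : w ⬝ᵥ w = ∑ j, (b.repr y j) ^ 2 := by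
    rw [← inner_eq_dot, key]
    exact Finset.sum_congr rfl fun j _ => (sq _).symm
  rw [hinner1, hinner2, Finset.mul_sum]
  exact Finset.sum_le_sum fun j _ => mul_le_mul_of_nonneg_right
    (eigenvalues_le_lambdaMax hM j) (sq_nonneg _)

/-- crude bound `|⟪Mw, w⟫| ≤ ‖M‖ * ⟪w,w⟫`. -/
lemma abs_dotProduct_le (M : Matrix (Fin n) (Fin n) ℝ) (w : Fin n → ℝ) :
    |(M *ᵥ w) ⬝ᵥ w| ≤ ‖M‖ * (w ⬝ᵥ w) := by
  set y : EuclideanSpace ℝ (Fin n) := (WithLp.equiv 2 (Fin n → ℝ)).symm w with hy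
  have hTy : Matrix.toEuclideanCLM (𝕜 := ℝ) M y = (WithLp.equiv 2 (Fin n → ℝ)).symm (M *ᵥ w) := by
    simp [hy, Matrix.toLin'_apply]
  have h1 : (M *ᵥ w) ⬝ᵥ w = (inner ℝ (Matrix.toEuclideanCLM (𝕜 := ℝ) M y) y : ℝ) := by
    rw [hTy, inner_eq_dot]
  rw [h1, dot_self_eq]
  calc |(inner ℝ (Matrix.toEuclideanCLM (𝕜 := ℝ) M y) y : ℝ)|
      ≤ ‖Matrix.toEuclideanCLM (𝕜 := ℝ) M y‖ * ‖y‖ := abs_real_inner_le_norm _ _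
    _ ≤ ‖Matrix.toEuclideanCLM (𝕜 := ℝ) M‖ * ‖y‖ * ‖y‖ :=
        mul_le_mul_of_nonneg_right ((Matrix.toEuclideanCLM (𝕜 := ℝ) M).le_opNorm y) (norm_nonneg _)
    _ = ‖M‖ * ‖y‖ ^ 2 := by rw [← Matrix.cstar_norm_def]; ring

end Wazewski

namespace Wazewski
variable {n : ℕ}

lemma lambdaMax_le_add [Nonempty (Fin n)] {M M' : Matrix (Fin n) (Fin n) ℝ}
    (hM : M.IsHermitian) (hM' : M'.IsHermitian) :
    lambdaMax M ≤ lambdaMax M' + ‖M - M'‖ := by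
  obtain ⟨j, hj⟩ := exists_lambdaMax_eq hM
  set w : Fin n → ℝ := (WithLp.equiv 2 (Fin n → ℝ)) (hM.eigenvectorBasis j) with hw
  have hww : w ⬝ᵥ w = 1 := by
    rw [hw, ← inner_eq_dot]
    simp only [Equiv.symm_apply_apply]
    rw [real_inner_self_eq_norm_sq, hM.eigenvectorBasis.orthonormal.1 j]
    norm_num
  have hMw : (M *ᵥ w) ⬝ᵥ w = hM.eigenvalues j := by
    rw [hw, WithLp.equiv_apply, hM.mulVec_eigenvectorBasis j, smul_dotProduct]
    rw [← WithLp.equiv_apply, ← hw, hww, smul_eq_mul, mul_one]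
  have hsplit : (M *ᵥ w) ⬝ᵥ w = ((M - M') *ᵥ w) ⬝ᵥ w + (M' *ᵥ w) ⬝ᵥ w := by
    rw [Matrix.sub_mulVec, sub_dotProduct]; ring
  have h1 : ((M - M') *ᵥ w) ⬝ᵥ w ≤ ‖M - M'‖ := by
    have := abs_dotProduct_le (M - M') w
    rw [hww, mul_one] at this
    exact (abs_le.mp this).2
  have h2 : (M' *ᵥ w) ⬝ᵥ w ≤ lambdaMax M' := by
    have := dotProduct_le_lambdaMax hM' w
    rwa [hww, mul_one] at this
  rw [hj, ← hMw, hsplit]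
  linarith

lemma lipschitzOnWith_lambdaMax [Nonempty (Fin n)] :
    LipschitzOnWith 1 lambdaMax {M : Matrix (Fin n) (Fin n) ℝ | M.IsHermitian} := by
  rw [lipschitzOnWith_iff_dist_le_mul]
  intro M hM M' hM'
  rw [NNReal.coe_one, one_mul, Real.dist_eq, dist_eq_norm]
  rw [abs_sub_le_iff]
  constructor
  · have := lambdaMax_le_add hM hM'; linarith
  · have := lambdaMax_le_add hM' hM
    rw [← neg_sub, norm_neg] at this
    linarith

lemma isHermitian_symmPart (M : Matrix (Fin n) (Fin n) ℝ) : (Mᵀ + M).IsHermitian := by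
  unfold Matrix.IsHermitian
  ext i j
  simp [Matrix.conjTranspose_apply, Matrix.transpose_apply, Matrix.add_apply, add_comm]

lemma continuousOn_f [Nonempty (Fin n)] {A : ℝ → Matrix (Fin n) (Fin n) ℝ} {s : Set ℝ}
    (hA : ContinuousOn A s) :
    ContinuousOn (fun x => lambdaMax ((A x)ᵀ + A x)) s := by
  have hS : ContinuousOn (fun x => (A x)ᵀ + A x) s :=
    ((continuous_id.matrix_transpose).comp_continuousOn hA).add hA
  exact lipschitzOnWith_lambdaMax.continuousOn.comp hS
    (fun x _ => isHermitian_symmPart (A x))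

end Wazewski

namespace Wazewski
variable {n : ℕ}

/-- `M ↦ M *ᵥ v` as a continuous linear map. -/
noncomputable def mulVecCLM (v : Fin n → ℝ) :
    Matrix (Fin n) (Fin n) ℝ →L[ℝ] (Fin n → ℝ) :=
  LinearMap.toContinuousLinearMap
    { toFun := fun M => M *ᵥ v
      map_add' := fun M N => Matrix.add_mulVec M N v
      map_smul' := fun c M => (Matrix.smul_mulVec c M v) }

@[simp] lemma mulVecCLM_apply (v : Fin n → ℝ) (M : Matrix (Fin n) (Fin n) ℝ) :
    mulVecCLM v M = M *ᵥ v := rfl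

lemma sum_deriv_eq_dot (B : Matrix (Fin n) (Fin n) ℝ) (w : Fin n → ℝ) :
    (∑ i, ((B *ᵥ w) i * w i + w i * (B *ᵥ w) i)) = ((Bᵀ + B) *ᵥ w) ⬝ᵥ w := by
  have h1 : (Bᵀ *ᵥ w) ⬝ᵥ w = (B *ᵥ w) ⬝ᵥ w := by
    rw [Matrix.mulVec_transpose, ← Matrix.dotProduct_mulVec, dotProduct_comm]
  rw [Matrix.add_mulVec, add_dotProduct, h1]
  simp only [dotProduct]
  rw [← Finset.sum_add_distrib]
  exact Finset.sum_congr rfl fun i _ => by ring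

end Wazewski


open Wazewski

/-- `2 ln‖Φ(t,τ)‖ ≤ ∫_τ^t λ_max[A(s)ᵀ + A(s)] ds` for all `t ≥ τ ≥ t₀`,
where `Φ` is the transition matrix of `ẋ = A(t)x`. -/
theorem stmt1 {n : ℕ} (t₀ : ℝ) (A : ℝ → Matrix (Fin n) (Fin n) ℝ)
    (hA : ContinuousOn A (Ici t₀))
    (Φ : ℝ → ℝ → Matrix (Fin n) (Fin n) ℝ)
    (hΦ_id : ∀ τ ∈ Ici t₀, Φ τ τ = 1)
    (hΦ_deriv : ∀ τ ∈ Ici t₀, ∀ t ∈ Ici t₀,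
      HasDerivWithinAt (fun s => Φ s τ) (A t * Φ t τ) (Ici t₀) t) :
    ∀ τ ∈ Ici t₀, ∀ t ∈ Ici τ,
      2 * Real.log ‖Φ t τ‖ ≤ ∫ s in τ..t, lambdaMax ((A s)ᵀ + A s) := by
  rcases Nat.eq_zero_or_pos n with hn | hn
  · subst hn
    intro τ hτ t ht
    have h1 : Φ t τ = 0 := Subsingleton.elim _ _
    have h2 : ∀ s : ℝ, lambdaMax ((A s)ᵀ + A s) = 0 := by
      intro s
      have he : spectrum ℝ ((A s)ᵀ + A s) = ∅ := by
        ext μ; simp [spectrum.mem_iff, isUnit_of_subsingleton]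
      rw [lambdaMax, he, Real.sSup_empty]
    simp only [h1, h2, norm_zero, Real.log_zero, mul_zero, intervalIntegral.integral_zero]
    exact le_refl 0
  haveI : Nonempty (Fin n) := ⟨⟨0, hn⟩⟩
  intro τ hτ t ht
  simp only [mem_Ici] at hτ ht
  set S : ℝ → Matrix (Fin n) (Fin n) ℝ := fun s => (A s)ᵀ + A s with hS
  set f : ℝ → ℝ := fun s => lambdaMax (S s) with hf
  set F : ℝ → ℝ := fun s => ∫ u in τ..s, f u with hF
  have hIcc : Icc τ t ⊆ Ici t₀ := fun s hs => le_trans hτ hs.1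
  have hfcont : ContinuousOn f (Ici t₀) := continuousOn_f hA
  have hSherm : ∀ s, (S s).IsHermitian := fun s => isHermitian_symmPart (A s)
  have hScont : ContinuousOn S (Ici t₀) :=
    ((continuous_id.matrix_transpose).comp_continuousOn hA).add hA
  -- FTC facts
  have hfint : ∀ s, τ ≤ s → s ≤ t → IntervalIntegrable f MeasureTheory.volume τ s := by
    intro s hs1 hs2
    apply ContinuousOn.intervalIntegrable
    rw [uIcc_of_le hs1]
    exact hfcont.mono (fun u hu => le_trans hτ hu.1)
  have hFderiv : ∀ s ∈ Ioo τ t, HasDerivAt F (f s) s := by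
    intro s hs
    have hsI : s ∈ Ioi t₀ := lt_of_le_of_lt hτ hs.1
    apply intervalIntegral.integral_hasDerivAt_right (hfint s hs.1.le hs.2.le)
    · exact ContinuousOn.stronglyMeasurableAtFilter isOpen_Ioi
        (hfcont.mono Ioi_subset_Ici_self) s hsI
    · exact (hfcont.mono Ioi_subset_Ici_self).continuousAt (isOpen_Ioi.mem_nhds hsI)
  have hFcont : ContinuousOn F (Icc τ t) := by
    rw [← uIcc_of_le ht]
    apply intervalIntegral.continuousOn_primitive_interval
    rw [uIcc_of_le ht]
    exact (hfcont.mono hIcc).integrableOn_compact isCompact_Icc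
  -- bound for the lower estimate
  obtain ⟨c, hc⟩ := isCompact_Icc.exists_bound_of_continuousOn (hScont.mono hIcc)
  -- the per-vector dynamics
  have hmain : ∀ v : Fin n → ℝ,
      ((Φ t τ *ᵥ v) ⬝ᵥ (Φ t τ *ᵥ v) ≤ Real.exp (F t) * (v ⬝ᵥ v)) ∧
      (Real.exp (c * τ) * (v ⬝ᵥ v) ≤ ((Φ t τ *ᵥ v) ⬝ᵥ (Φ t τ *ᵥ v)) * Real.exp (c * t)) := by
    intro v
    set x : ℝ → (Fin n → ℝ) := fun s => Φ s τ *ᵥ v with hx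
    set g : ℝ → ℝ := fun s => x s ⬝ᵥ x s with hg
    have hxderiv : ∀ s ∈ Ici t₀, HasDerivWithinAt x (A s *ᵥ x s) (Ici t₀) s := by
      intro s hs
      have h := ((mulVecCLM v).hasFDerivAt).comp_hasDerivWithinAt s
        (hΦ_deriv τ hτ s hs)
      simpa [Function.comp_def, hx, Matrix.mulVec_mulVec] using h
    have hgderiv : ∀ s ∈ Ici t₀, HasDerivWithinAt g ((S s *ᵥ x s) ⬝ᵥ x s) (Ici t₀) s := by
      intro s hs
      have hsum : HasDerivWithinAt (fun u => ∑ i, x u i * x u i)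
          (∑ i, ((A s *ᵥ x s) i * x s i + x s i * (A s *ᵥ x s) i)) (Ici t₀) s := by
        apply HasDerivWithinAt.fun_sum
        intro i _
        have hi := (hasDerivWithinAt_pi.mp (hxderiv s hs)) i
        exact hi.mul hi
      rw [hS]
      rw [← sum_deriv_eq_dot (A s) (x s)]
      exact hsum
    have hgc : ContinuousOn g (Ici t₀) :=
      fun s hs => (hgderiv s hs).continuousWithinAt
    have hgnonneg : ∀ s, 0 ≤ g s :=
      fun s => Finset.sum_nonneg fun i _ => mul_self_nonneg _
    have hgτ : g τ = v ⬝ᵥ v := by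
      simp [hg, hx, hΦ_id τ hτ, Matrix.one_mulVec]
    have hmem_nhds : ∀ s ∈ Ioo τ t, Ici t₀ ∈ nhds s := fun s hs =>
      Filter.mem_of_superset (isOpen_Ioi.mem_nhds (lt_of_le_of_lt hτ hs.1)) Ioi_subset_Ici_self
    constructor
    · -- upper estimate
      set h : ℝ → ℝ := fun s => g s * Real.exp (-F s) with hh
      have hanti : AntitoneOn h (Icc τ t) := by
        have hcont : ContinuousOn h (Icc τ t) :=
          (hgc.mono hIcc).mul (Real.continuous_exp.comp_continuousOn hFcont.neg)
        have hder : ∀ s ∈ Ioo τ t, HasDerivAt h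
            ((S s *ᵥ x s) ⬝ᵥ x s * Real.exp (-F s) + g s * (Real.exp (-F s) * -(f s))) s := by
          intro s hs
          have hg' : HasDerivAt g ((S s *ᵥ x s) ⬝ᵥ x s) s :=
            (hgderiv s (hIcc (Ioo_subset_Icc_self hs))).hasDerivAt (hmem_nhds s hs)
          have hF' : HasDerivAt (fun u => -F u) (-(f s)) s := (hFderiv s hs).neg
          exact hg'.mul hF'.exp
        apply antitoneOn_of_deriv_nonpos (convex_Icc τ t) hcont
        · intro s hs
          rw [interior_Icc] at hs
          exact (hder s hs).differentiableAt.differentiableWithinAt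
        · intro s hs
          rw [interior_Icc] at hs
          rw [(hder s hs).deriv]
          have hray : (S s *ᵥ x s) ⬝ᵥ x s ≤ f s * g s :=
            dotProduct_le_lambdaMax (hSherm s) (x s)
          nlinarith [Real.exp_pos (-F s), hgnonneg s]
      have hht : h t ≤ h τ :=
        hanti (left_mem_Icc.mpr ht) (right_mem_Icc.mpr ht) ht
      have hFτ : F τ = 0 := intervalIntegral.integral_same
      rw [hh] at hht
      simp only [hFτ, neg_zero, Real.exp_zero, mul_one] at hht
      have hse : Real.exp (-F t) * Real.exp (F t) = 1 := by
        rw [← Real.exp_add]; simp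
      have h3 := mul_le_mul_of_nonneg_right hht (Real.exp_pos (F t)).le
      calc (Φ t τ *ᵥ v) ⬝ᵥ (Φ t τ *ᵥ v) = g t * (Real.exp (-F t) * Real.exp (F t)) := by
            rw [hse, mul_one]
        _ ≤ g τ * Real.exp (F t) := by rw [← mul_assoc]; exact h3
        _ = Real.exp (F t) * (v ⬝ᵥ v) := by rw [hgτ]; ring
    · -- lower estimate
      set k : ℝ → ℝ := fun s => g s * Real.exp (c * s) with hk
      have hmono : MonotoneOn k (Icc τ t) := by
        have hcont : ContinuousOn k (Icc τ t) :=
          (hgc.mono hIcc).mul (Real.continuous_exp.comp (continuous_const.mul continuous_id)).continuousOn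
        have hder : ∀ s ∈ Ioo τ t, HasDerivAt k
            ((S s *ᵥ x s) ⬝ᵥ x s * Real.exp (c * s) + g s * (Real.exp (c * s) * c)) s := by
          intro s hs
          have hg' : HasDerivAt g ((S s *ᵥ x s) ⬝ᵥ x s) s :=
            (hgderiv s (hIcc (Ioo_subset_Icc_self hs))).hasDerivAt (hmem_nhds s hs)
          have hc' : HasDerivAt (fun u : ℝ => c * u) c s := by
            simpa using (hasDerivAt_id s).const_mul c
          exact hg'.mul hc'.exp
        apply monotoneOn_of_deriv_nonneg (convex_Icc τ t) hcont
        · intro s hs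
          rw [interior_Icc] at hs
          exact (hder s hs).differentiableAt.differentiableWithinAt
        · intro s hs
          rw [interior_Icc] at hs
          rw [(hder s hs).deriv]
          have hray : -(‖S s‖ * g s) ≤ (S s *ᵥ x s) ⬝ᵥ x s := by
            have := abs_dotProduct_le (S s) (x s)
            have := (abs_le.mp this).1
            linarith
          have hcs : ‖S s‖ ≤ c := hc s (Ioo_subset_Icc_self hs)
          have h5 : ‖S s‖ * g s ≤ c * g s := mul_le_mul_of_nonneg_right hcs (hgnonneg s)
          have h6 : -(c * g s) ≤ (S s *ᵥ x s) ⬝ᵥ x s := by linarith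
          nlinarith [mul_le_mul_of_nonneg_right h6 (Real.exp_pos (c * s)).le]
      have hkk : k τ ≤ k t :=
        hmono (left_mem_Icc.mpr ht) (right_mem_Icc.mpr ht) ht
      rw [hk] at hkk
      simp only at hkk
      rw [hgτ] at hkk
      calc Real.exp (c * τ) * (v ⬝ᵥ v) = (v ⬝ᵥ v) * Real.exp (c * τ) := by ring
        _ ≤ g t * Real.exp (c * t) := hkk
        _ = ((Φ t τ *ᵥ v) ⬝ᵥ (Φ t τ *ᵥ v)) * Real.exp (c * t) := rfl
  -- positivity of the norm
  have hΦne : Φ t τ ≠ 0 := by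
      intro h0
      obtain ⟨-, hlow⟩ := hmain (Pi.single (Classical.arbitrary (Fin n)) 1)
      rw [h0, Matrix.zero_mulVec, zero_dotProduct, zero_mul] at hlow
      have hvv : (Pi.single (Classical.arbitrary (Fin n)) 1 : Fin n → ℝ) ⬝ᵥ
          (Pi.single (Classical.arbitrary (Fin n)) 1) = 1 := by
        simp [dotProduct, Pi.single_apply]
      rw [hvv, mul_one] at hlow
      exact absurd hlow (not_le.mpr (Real.exp_pos _))
  have hΦpos : 0 < ‖Φ t τ‖ := norm_pos_iff.mpr hΦne
  -- operator norm bound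
  have hbound : ‖Φ t τ‖ ≤ Real.exp (F t / 2) := by
    rw [Matrix.cstar_norm_def]
    apply ContinuousLinearMap.opNorm_le_bound _ (Real.exp_pos _).le
    intro y
    set w := (WithLp.equiv 2 (Fin n → ℝ)) y with hw
    have hyw : (WithLp.equiv 2 (Fin n → ℝ)).symm w = y := Equiv.symm_apply_apply _ _
    have hTy : Matrix.toEuclideanCLM (𝕜 := ℝ) (Φ t τ) y
        = (WithLp.equiv 2 (Fin n → ℝ)).symm (Φ t τ *ᵥ w) := by
      rw [← hyw]; simp [Matrix.toLin'_apply]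
    have hny : ‖y‖ ^ 2 = w ⬝ᵥ w := by rw [dot_self_eq w, hyw]
    have hup := (hmain w).1
    have h1 : ‖Matrix.toEuclideanCLM (𝕜 := ℝ) (Φ t τ) y‖ ^ 2
        ≤ (Real.exp (F t / 2) * ‖y‖) ^ 2 := by
      rw [hTy, ← dot_self_eq]
      calc (Φ t τ *ᵥ w) ⬝ᵥ (Φ t τ *ᵥ w) ≤ Real.exp (F t) * (w ⬝ᵥ w) := hup
        _ = (Real.exp (F t / 2) * ‖y‖) ^ 2 := by
            rw [mul_pow, hny, pow_two, ← Real.exp_add, add_halves]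
    have h2 : (0:ℝ) ≤ Real.exp (F t / 2) * ‖y‖ :=
      mul_nonneg (Real.exp_pos _).le (norm_nonneg _)
    nlinarith [norm_nonneg (Matrix.toEuclideanCLM (𝕜 := ℝ) (Φ t τ) y)]
  have hlog : Real.log ‖Φ t τ‖ ≤ F t / 2 :=
    (Real.log_le_iff_le_exp hΦpos).mpr hbound
  have : (∫ s in τ..t, lambdaMax ((A s)ᵀ + A s)) = F t := rfl
  rw [this]
  linarith
end

section
/- Suppose there exist finite positive constants γ̃ and λ̃ such that ∫_τ^t λ_max[A(s)ᵀ + A(s)] ds ≤ γ̃ − λ̃·(t − τ) for all t ≥ τ ≥ t₀. Then ‖Φ(t,τ)‖_I ≤ e^{γ̃/2} · e^{−(λ̃/2)(t−τ)} for all t ≥ τ ≥ t₀; in particular the system is uniformly asymptotically stable with constants γ = e^{γ̃/2} and λ = λ̃/2. -/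
open scoped Matrix
open scoped Matrix.Norms.L2Operator  -- `‖·‖` on matrices is the operator norm induced by the Euclidean norm
open Set

open Matrix Topology

section AuxLemmas

variable {n : ℕ}

lemma herm_add (X : Matrix (Fin n) (Fin n) ℝ) : (Xᵀ + X).IsHermitian := by
  rw [Matrix.IsHermitian, conjTranspose_add, conjTranspose_eq_transpose_of_trivial,
    conjTranspose_eq_transpose_of_trivial, transpose_transpose, add_comm]

lemma dp_self_nonneg (v : Fin n → ℝ) : 0 ≤ v ⬝ᵥ v :=
  Finset.sum_nonneg fun _ _ => mul_self_nonneg _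

lemma rayleigh_le_isup {M : Matrix (Fin n) (Fin n) ℝ} (hM : M.IsHermitian)
    (x : Fin n → ℝ) (hn : 0 < n) :
    x ⬝ᵥ (M *ᵥ x) ≤ (⨆ i, hM.eigenvalues i) * (x ⬝ᵥ x) := by
  haveI : Nonempty (Fin n) := ⟨⟨0, hn⟩⟩
  set V : Matrix (Fin n) (Fin n) ℝ := (hM.eigenvectorUnitary : Matrix (Fin n) (Fin n) ℝ) with hV
  set y : Fin n → ℝ := Vᵀ *ᵥ x with hy
  have hstar : star V = Vᵀ := by
    rw [Matrix.star_eq_conjTranspose, conjTranspose_eq_transpose_of_trivial]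
  have hVV : V * Vᵀ = 1 := by
    rw [← hstar]; exact (Matrix.mem_unitaryGroup_iff).mp hM.eigenvectorUnitary.2
  have key : ∀ z : Fin n → ℝ, x ⬝ᵥ (V *ᵥ z) = y ⬝ᵥ z := by
    intro z
    rw [hy, mulVec_transpose, dotProduct_mulVec]
  have hxx : x ⬝ᵥ x = y ⬝ᵥ y := by
    rw [hy]
    conv_rhs => rw [← hy, ← key y]
    rw [hy, mulVec_mulVec, hVV, one_mulVec]
  have hD : (RCLike.ofReal ∘ hM.eigenvalues : Fin n → ℝ) = hM.eigenvalues := by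
    ext i; simp
  have hMx : x ⬝ᵥ (M *ᵥ x) = ∑ i, hM.eigenvalues i * (y i * y i) := by
    conv_lhs => rw [hM.spectral_theorem, Unitary.conjStarAlgAut_apply, ← hV, hstar, hD, ← mulVec_mulVec, ← mulVec_mulVec,
      key, ← hy]
    rw [dotProduct]
    congr 1; ext i
    rw [mulVec_diagonal]; ring
  rw [hMx, hxx, dotProduct, Finset.mul_sum]
  apply Finset.sum_le_sum
  intro i _
  have h1 : hM.eigenvalues i ≤ ⨆ j, hM.eigenvalues j := le_ciSup (Finite.bddAbove_range _) i
  exact mul_le_mul_of_nonneg_right h1 (mul_self_nonneg _)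

lemma lambdaMax_eq_isup {M : Matrix (Fin n) (Fin n) ℝ} (hM : M.IsHermitian) (hn : 0 < n) :
    lambdaMax M = ⨆ i, hM.eigenvalues i := by
  haveI : Nonempty (Fin n) := ⟨⟨0, hn⟩⟩
  have hub : ∀ μ ∈ spectrum ℝ M, μ ≤ ⨆ i, hM.eigenvalues i := by
    intro μ hμ
    rw [← Matrix.spectrum_toEuclideanLin] at hμ
    obtain ⟨v, hv⟩ := (Module.End.HasEigenvalue.of_mem_spectrum hμ).exists_hasEigenvector
    have hv1 : toEuclideanLin M v = μ • v := hv.apply_eq_smul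
    set w : Fin n → ℝ := (WithLp.equiv 2 (Fin n → ℝ)) v with hw
    have hMw : M *ᵥ w = μ • w := by
      have := congrArg (WithLp.equiv 2 (Fin n → ℝ)) hv1
      simpa [hw, Matrix.toLin'_apply] using this
    have hw0 : w ≠ 0 := by
      simpa [hw] using hv.2
    have hpos : 0 < w ⬝ᵥ w :=
      lt_of_le_of_ne (dp_self_nonneg w) (fun h => hw0 (dotProduct_self_eq_zero.mp h.symm))
    have h1 : μ * (w ⬝ᵥ w) ≤ (⨆ i, hM.eigenvalues i) * (w ⬝ᵥ w) := by
      calc μ * (w ⬝ᵥ w) = w ⬝ᵥ (M *ᵥ w) := by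
            rw [hMw, dotProduct_smul]; simp [mul_comm]
        _ ≤ _ := rayleigh_le_isup hM w hn
    exact le_of_mul_le_mul_right h1 hpos
  have hne : (⨆ i, hM.eigenvalues i) ∈ spectrum ℝ M := by
    obtain ⟨i, hi⟩ := Finite.exists_max hM.eigenvalues
    have : (⨆ j, hM.eigenvalues j) = hM.eigenvalues i :=
      le_antisymm (ciSup_le hi) (le_ciSup (Finite.bddAbove_range _) i)
    rw [this]; exact hM.eigenvalues_mem_spectrum_real i
  refine le_antisymm (csSup_le ⟨_, hne⟩ hub) (le_csSup ⟨_, hub⟩ hne)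

lemma norm_equiv_symm (v : Fin n → ℝ) :
    ‖(WithLp.equiv 2 (Fin n → ℝ)).symm v‖ = Real.sqrt (v ⬝ᵥ v) := by
  rw [EuclideanSpace.norm_eq]
  congr 1
  simp [dotProduct, pow_two]

lemma dp_eq_inner (v w : Fin n → ℝ) :
    v ⬝ᵥ w = (inner ℝ ((WithLp.equiv 2 (Fin n → ℝ)).symm v)
      ((WithLp.equiv 2 (Fin n → ℝ)).symm w) : ℝ) := by
  rw [PiLp.inner_apply]
  simp [dotProduct, mul_comm]

lemma exists_max_vector {M : Matrix (Fin n) (Fin n) ℝ} (hM : M.IsHermitian) (hn : 0 < n) :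
    ∃ v : Fin n → ℝ, v ⬝ᵥ v = 1 ∧ v ⬝ᵥ (M *ᵥ v) = lambdaMax M := by
  haveI : Nonempty (Fin n) := ⟨⟨0, hn⟩⟩
  obtain ⟨i, hi⟩ := Finite.exists_max hM.eigenvalues
  set v : Fin n → ℝ := ⇑(hM.eigenvectorBasis i) with hv
  have hnorm : ‖hM.eigenvectorBasis i‖ = 1 := hM.eigenvectorBasis.orthonormal.1 i
  have hvv : v ⬝ᵥ v = 1 := by
    have h2 : ‖(WithLp.equiv 2 (Fin n → ℝ)).symm v‖ = 1 := hnorm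
    rw [norm_equiv_symm] at h2
    have := congrArg (· ^ 2) h2
    simpa [Real.sq_sqrt (dp_self_nonneg v)] using this
  refine ⟨v, hvv, ?_⟩
  rw [hM.mulVec_eigenvectorBasis i, dotProduct_smul, smul_eq_mul, ← hv, hvv,
    lambdaMax_eq_isup hM hn, mul_one]
  exact (le_antisymm (ciSup_le hi) (le_ciSup (Finite.bddAbove_range _) i)).symm

lemma lambdaMax_le_of_herm (hn : 0 < n) {M N : Matrix (Fin n) (Fin n) ℝ}
    (hM : M.IsHermitian) (hN : N.IsHermitian) :
    lambdaMax M ≤ lambdaMax N + ‖M - N‖ := by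
  obtain ⟨v, hv1, hv2⟩ := exists_max_vector hM hn
  have hsplit : v ⬝ᵥ (M *ᵥ v) = v ⬝ᵥ (N *ᵥ v) + v ⬝ᵥ ((M - N) *ᵥ v) := by
    rw [← dotProduct_add, ← Matrix.add_mulVec, add_sub_cancel]
  have h1 : v ⬝ᵥ (N *ᵥ v) ≤ lambdaMax N := by
    have := rayleigh_le_isup hN v hn
    rw [← lambdaMax_eq_isup hN hn] at this
    simpa [hv1] using this
  have hnv : ‖(WithLp.equiv 2 (Fin n → ℝ)).symm v‖ = 1 := by
    rw [norm_equiv_symm, hv1, Real.sqrt_one]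
  have h2 : v ⬝ᵥ ((M - N) *ᵥ v) ≤ ‖M - N‖ := by
    rw [dp_eq_inner]
    calc _ ≤ ‖(WithLp.equiv 2 (Fin n → ℝ)).symm v‖ *
          ‖(WithLp.equiv 2 (Fin n → ℝ)).symm ((M - N) *ᵥ v)‖ := real_inner_le_norm _ _
      _ ≤ 1 * (‖M - N‖ * 1) := by
          rw [hnv, one_mul]
          have := Matrix.l2_opNorm_mulVec (M - N) ((WithLp.equiv 2 (Fin n → ℝ)).symm v)
          rw [hnv] at this
          simpa using this
      _ = ‖M - N‖ := by ring
  linarith [hv2 ▸ hsplit]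

lemma rayleigh_lambdaMax {M : Matrix (Fin n) (Fin n) ℝ} (hM : M.IsHermitian) (hn : 0 < n)
    (x : Fin n → ℝ) : x ⬝ᵥ (M *ᵥ x) ≤ lambdaMax M * (x ⬝ᵥ x) := by
  rw [lambdaMax_eq_isup hM hn]; exact rayleigh_le_isup hM x hn

lemma lipschitz_lambdaMax (hn : 0 < n) :
    LipschitzWith 2 (fun X : Matrix (Fin n) (Fin n) ℝ => lambdaMax (Xᵀ + X)) := by
  apply LipschitzWith.of_dist_le_mul
  intro X Y
  have key : ∀ P Q : Matrix (Fin n) (Fin n) ℝ,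
      lambdaMax (Pᵀ + P) - lambdaMax (Qᵀ + Q) ≤ 2 * ‖P - Q‖ := by
    intro P Q
    have h1 := lambdaMax_le_of_herm hn (herm_add P) (herm_add Q)
    have h2 : ‖(Pᵀ + P) - (Qᵀ + Q)‖ ≤ 2 * ‖P - Q‖ := by
      have he : (Pᵀ + P) - (Qᵀ + Q) = (P - Q)ᵀ + (P - Q) := by
        rw [Matrix.transpose_sub]; abel
      rw [he]
      calc ‖(P - Q)ᵀ + (P - Q)‖ ≤ ‖(P - Q)ᵀ‖ + ‖P - Q‖ := norm_add_le _ _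
        _ = 2 * ‖P - Q‖ := by
            rw [← Matrix.conjTranspose_eq_transpose_of_trivial,
              Matrix.l2_opNorm_conjTranspose]; ring
    linarith
  rw [Real.dist_eq, dist_eq_norm]
  rw [abs_sub_le_iff]
  constructor
  · simpa using key X Y
  · have := key Y X
    rw [norm_sub_rev] at this
    simpa using this

lemma dp_symm_helper (B : Matrix (Fin n) (Fin n) ℝ) (w : Fin n → ℝ) :
    (B *ᵥ w) ⬝ᵥ w = w ⬝ᵥ (Bᵀ *ᵥ w) := by
  rw [Matrix.dotProduct_mulVec, Matrix.vecMul_transpose]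

end AuxLemmas

/-- if `∫_τ^t λ_max[A(s)ᵀ+A(s)] ds ≤ γ̃ − λ̃(t−τ)` for all `t ≥ τ ≥ t₀` with
`γ̃, λ̃ > 0`, then `‖Φ(t,τ)‖ ≤ e^{γ̃/2} e^{−(λ̃/2)(t−τ)}` for all `t ≥ τ ≥ t₀`; i.e. the system
is uniformly asymptotically stable with `γ = e^{γ̃/2}` and `λ = λ̃/2`. -/
theorem stmt2 {n : ℕ} (t₀ : ℝ) (A : ℝ → Matrix (Fin n) (Fin n) ℝ)
    (hA : ContinuousOn A (Ici t₀))
    (Φ : ℝ → ℝ → Matrix (Fin n) (Fin n) ℝ)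
    (hΦ_id : ∀ τ ∈ Ici t₀, Φ τ τ = 1)
    (hΦ_deriv : ∀ τ ∈ Ici t₀, ∀ t ∈ Ici t₀,
      HasDerivWithinAt (fun s => Φ s τ) (A t * Φ t τ) (Ici t₀) t)
    (γ' lam : ℝ) (hγ' : 0 < γ') (hlam : 0 < lam)
    (hbound : ∀ τ ∈ Ici t₀, ∀ t ∈ Ici τ,
      (∫ s in τ..t, lambdaMax ((A s)ᵀ + A s)) ≤ γ' - lam * (t - τ)) :
    ∀ τ ∈ Ici t₀, ∀ t ∈ Ici τ,
      ‖Φ t τ‖ ≤ Real.exp (γ' / 2) * Real.exp (-(lam / 2) * (t - τ)) := by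
  intro τ hτ t ht
  rcases Nat.eq_zero_or_pos n with hn0 | hn
  · subst hn0
    have h0 : Φ t τ = 0 := by ext i j; exact i.elim0
    rw [h0, norm_zero]
    positivity
  have hτ' : t₀ ≤ τ := hτ
  have hτt : τ ≤ t := ht
  have ht' : t₀ ≤ t := le_trans hτ' hτt
  set μf : ℝ → ℝ := fun s => lambdaMax ((A s)ᵀ + A s) with hμf
  have hμcont : ContinuousOn μf (Ici t₀) :=
    (lipschitz_lambdaMax hn).continuous.comp_continuousOn hA
  have hInt : ∀ b, τ ≤ b → IntervalIntegrable μf MeasureTheory.volume τ b := by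
    intro b hb
    apply (hμcont.mono ?_).intervalIntegrable
    rw [uIcc_of_le hb]
    exact fun u hu => le_trans hτ' hu.1
  set c : ℝ → ℝ := fun s => ∫ u in τ..s, μf u with hc
  have hcb : ∀ b ∈ Ioi τ, HasDerivAt c (μf b) b := by
    intro b hb
    have hb0 : t₀ < b := lt_of_le_of_lt hτ' hb
    refine intervalIntegral.integral_hasDerivAt_right (hInt b (le_of_lt hb)) ?_ ?_
    · exact (hμcont.mono Ioi_subset_Ici_self).stronglyMeasurableAtFilter isOpen_Ioi b hb0
    · exact hμcont.continuousAt (Ici_mem_nhds hb0)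
  have hccont : ContinuousOn c (Ici τ) := by
    intro b hb
    rcases eq_or_lt_of_le (mem_Ici.mp hb) with rfl | hlt
    · have hmeas : StronglyMeasurableAtFilter μf (𝓝[Ioi τ] τ)
          MeasureTheory.volume :=
        ((hμcont.mono (Ici_subset_Ici.mpr hτ')).mono
          Ioi_subset_Ici_self).stronglyMeasurableAtFilter_nhdsWithin measurableSet_Ioi τ
      have hcw : ContinuousWithinAt μf (Ioi τ) τ :=
        (hμcont τ hτ).mono (fun u hu => le_trans hτ' (le_of_lt hu))
      exact (intervalIntegral.integral_hasDerivWithinAt_right (s := Ici τ) (t := Ioi τ)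
        (hInt τ le_rfl) hmeas hcw).continuousWithinAt
    · exact (hcb b hlt).continuousAt.continuousWithinAt
  -- pointwise quadratic bound
  have key : ∀ x : Fin n → ℝ,
      (Φ t τ *ᵥ x) ⬝ᵥ (Φ t τ *ᵥ x) ≤ Real.exp (γ' - lam * (t - τ)) * (x ⬝ᵥ x) := by
    intro x
    set L : Matrix (Fin n) (Fin n) ℝ →ₗ[ℝ] (Fin n → ℝ) :=
      { toFun := fun M => M *ᵥ x
        map_add' := fun M N => Matrix.add_mulVec M N x
        map_smul' := fun r M => Matrix.smul_mulVec r M x } with hL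
    set y : ℝ → (Fin n → ℝ) := fun s => Φ s τ *ᵥ x with hy
    set f : ℝ → ℝ := fun s => y s ⬝ᵥ y s with hf
    have hyd : ∀ s ∈ Ici t₀, HasDerivWithinAt y (A s *ᵥ y s) (Ici t₀) s := by
      intro s hs
      have h1 : HasDerivWithinAt (fun u => L.toContinuousLinearMap (Φ u τ))
          (L.toContinuousLinearMap (A s * Φ s τ)) (Ici t₀) s :=
        (L.toContinuousLinearMap.hasFDerivAt).comp_hasDerivWithinAt s (hΦ_deriv τ hτ s hs)
      have h2 : L.toContinuousLinearMap (A s * Φ s τ) = A s *ᵥ y s := by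
        show (A s * Φ s τ) *ᵥ x = _
        rw [← Matrix.mulVec_mulVec]
      rw [h2] at h1
      exact h1
    have hfd : ∀ s ∈ Ici t₀, HasDerivWithinAt f
        ((A s *ᵥ y s) ⬝ᵥ y s + y s ⬝ᵥ (A s *ᵥ y s)) (Ici t₀) s := by
      intro s hs
      have hcomp : ∀ i : Fin n, HasDerivWithinAt (fun u => y u i)
          ((A s *ᵥ y s) i) (Ici t₀) s := fun i =>
        ((ContinuousLinearMap.proj (R := ℝ) (φ := fun _ : Fin n => ℝ)
          i).hasFDerivAt).comp_hasDerivWithinAt s (hyd s hs)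
      have hsum : HasDerivWithinAt (fun u => ∑ i, y u i * y u i)
          (∑ i, ((A s *ᵥ y s) i * y s i + y s i * (A s *ᵥ y s) i)) (Ici t₀) s :=
        HasDerivWithinAt.fun_sum (fun i _ => (hcomp i).mul (hcomp i))
      convert hsum using 1
      all_goals simp only [hf, dotProduct, Finset.sum_add_distrib]
    have hbd : ∀ s, (A s *ᵥ y s) ⬝ᵥ y s + y s ⬝ᵥ (A s *ᵥ y s) ≤ μf s * f s := by
      intro s
      have h1 : (A s *ᵥ y s) ⬝ᵥ y s = y s ⬝ᵥ ((A s)ᵀ *ᵥ y s) := dp_symm_helper (A s) (y s)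
      have h2 : (A s *ᵥ y s) ⬝ᵥ y s + y s ⬝ᵥ (A s *ᵥ y s)
          = y s ⬝ᵥ (((A s)ᵀ + A s) *ᵥ y s) := by
        rw [h1, Matrix.add_mulVec, dotProduct_add]
      rw [h2]
      exact rayleigh_lambdaMax (herm_add (A s)) hn (y s)
    set g : ℝ → ℝ := fun s => f s * Real.exp (-(c s)) with hg
    have hgd : ∀ b ∈ Ioi τ, HasDerivAt g
        (((A b *ᵥ y b) ⬝ᵥ y b + y b ⬝ᵥ (A b *ᵥ y b)) * Real.exp (-(c b))
          + f b * (Real.exp (-(c b)) * -(μf b))) b := by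
      intro b hb
      have hb0 : t₀ < b := lt_of_le_of_lt hτ' hb
      have hfb := (hfd b hb0.le).hasDerivAt (Ici_mem_nhds hb0)
      exact hfb.mul (((hcb b hb).neg).exp)
    have hganti : AntitoneOn g (Ici τ) := by
      apply antitoneOn_of_deriv_nonpos (convex_Ici τ)
      · apply ContinuousOn.mul
        · intro s hs
          exact ((hfd s (le_trans hτ' hs)).continuousWithinAt).mono
            (Ici_subset_Ici.mpr hτ')
        · exact Real.continuous_exp.comp_continuousOn hccont.neg
      · rw [interior_Ici]
        exact fun b hb => ((hgd b hb).differentiableAt).differentiableWithinAt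
      · rw [interior_Ici]
        intro b hb
        rw [(hgd b hb).deriv]
        have h1 := hbd b
        have h2 : 0 ≤ f b := dp_self_nonneg _
        have h3 : 0 < Real.exp (-(c b)) := Real.exp_pos _
        nlinarith
    have hgτt : g t ≤ g τ := hganti self_mem_Ici ht hτt
    have hcτ : c τ = 0 := intervalIntegral.integral_same
    have hyτ : y τ = x := by rw [hy]; simp only [hΦ_id τ hτ, Matrix.one_mulVec]
    have hgτ : g τ = x ⬝ᵥ x := by
      rw [hg]; simp only [hcτ, neg_zero, Real.exp_zero, mul_one, hf, hyτ]
    have h5 : f t * Real.exp (-(c t)) ≤ x ⬝ᵥ x := by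
      rw [← hgτ]; exact hgτt
    have h6 : f t ≤ Real.exp (c t) * (x ⬝ᵥ x) := by
      have h := mul_le_mul_of_nonneg_right h5 (le_of_lt (Real.exp_pos (c t)))
      calc f t = f t * Real.exp (-(c t)) * Real.exp (c t) := by
            rw [mul_assoc, ← Real.exp_add, neg_add_cancel, Real.exp_zero, mul_one]
        _ ≤ (x ⬝ᵥ x) * Real.exp (c t) := h
        _ = Real.exp (c t) * (x ⬝ᵥ x) := mul_comm _ _
    have h7 : c t ≤ γ' - lam * (t - τ) := hbound τ hτ t ht
    calc f t ≤ Real.exp (c t) * (x ⬝ᵥ x) := h6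
      _ ≤ Real.exp (γ' - lam * (t - τ)) * (x ⬝ᵥ x) :=
          mul_le_mul_of_nonneg_right (Real.exp_le_exp.mpr h7) (dp_self_nonneg x)
  -- conclude the operator norm bound
  set C : ℝ := Real.exp (γ' / 2) * Real.exp (-(lam / 2) * (t - τ)) with hC
  have hCpos : 0 < C := mul_pos (Real.exp_pos _) (Real.exp_pos _)
  have hCsq : Real.exp (γ' - lam * (t - τ)) = C ^ 2 := by
    rw [hC, mul_pow, sq, sq, ← Real.exp_add, ← Real.exp_add, ← Real.exp_add]
    ring_nf
  rw [Matrix.l2_opNorm_def]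
  apply ContinuousLinearMap.opNorm_le_bound _ (le_of_lt hCpos)
  intro v
  set x : Fin n → ℝ := (WithLp.equiv 2 (Fin n → ℝ)) v with hx
  have happ : ((Matrix.toEuclideanLin.trans LinearMap.toContinuousLinearMap) (Φ t τ)) v
      = (WithLp.equiv 2 (Fin n → ℝ)).symm (Φ t τ *ᵥ x) := rfl
  have hv : v = (WithLp.equiv 2 (Fin n → ℝ)).symm x := rfl
  rw [happ, hv, norm_equiv_symm, norm_equiv_symm]
  calc Real.sqrt ((Φ t τ *ᵥ x) ⬝ᵥ (Φ t τ *ᵥ x))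
      ≤ Real.sqrt (Real.exp (γ' - lam * (t - τ)) * (x ⬝ᵥ x)) :=
        Real.sqrt_le_sqrt (key x)
    _ = C * Real.sqrt (x ⬝ᵥ x) := by
        rw [hCsq, Real.sqrt_mul (sq_nonneg C), Real.sqrt_sq (le_of_lt hCpos)]
end

section
/- Suppose the system ẋ = A(t)x is uniformly asymptotically stable, i.e. ‖Φ(t,τ)‖_I ≤ γ·e^{−λ(t−τ)} for all t ≥ τ ≥ t₀ with constants γ, λ > 0. Then for every t ≥ t₀ the improper integral H(t) = ∫_t^∞ Φ(τ,t)ᵀ·Φ(τ,t) dτ converges, and the matrix H(t) is symmetric and positive definite: H(t)ᵀ = H(t) and xᵀ·H(t)·x > 0 for every nonzero x ∈ ℝⁿ. -/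
open scoped Matrix
open scoped Matrix.Norms.L2Operator  -- `‖·‖` on matrices is the operator norm induced by the Euclidean norm
open Set MeasureTheory

section aux

open scoped Matrix.Norms.L2Operator

noncomputable def transCLM (n : ℕ) :
    Matrix (Fin n) (Fin n) ℝ →L[ℝ] Matrix (Fin n) (Fin n) ℝ :=
  LinearMap.toContinuousLinearMap
    ((Matrix.transposeLinearEquiv (Fin n) (Fin n) ℝ ℝ).toLinearMap)

noncomputable def quadCLM {n : ℕ} (x : Fin n → ℝ) :
    Matrix (Fin n) (Fin n) ℝ →L[ℝ] ℝ :=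
  LinearMap.toContinuousLinearMap
    { toFun := fun M => x ⬝ᵥ (M *ᵥ x)
      map_add' := by intro M N; simp [Matrix.add_mulVec, dotProduct_add]
      map_smul' := by intro c M; simp [Matrix.smul_mulVec, dotProduct_smul,
        smul_eq_mul] }

lemma transCLM_apply {n : ℕ} (M : Matrix (Fin n) (Fin n) ℝ) : transCLM n M = Mᵀ := rfl

lemma quadCLM_apply {n : ℕ} (x : Fin n → ℝ) (M : Matrix (Fin n) (Fin n) ℝ) :
    quadCLM x M = x ⬝ᵥ (M *ᵥ x) := rfl

lemma dot_self_nonneg {n : ℕ} (v : Fin n → ℝ) : 0 ≤ v ⬝ᵥ v :=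
  Finset.sum_nonneg fun i _ => mul_self_nonneg _

end aux

/-- for a uniformly asymptotically stable system `ẋ = A(t)x`, the improper
integral `H(t) = ∫_t^∞ Φ(τ,t)ᵀ Φ(τ,t) dτ` converges for every `t ≥ t₀`, and `H(t)` is
symmetric and positive definite. -/
theorem stmt3 {n : ℕ} (t₀ : ℝ) (A : ℝ → Matrix (Fin n) (Fin n) ℝ)
    (hA : ContinuousOn A (Ici t₀))
    (Φ : ℝ → ℝ → Matrix (Fin n) (Fin n) ℝ)
    (hΦ_id : ∀ τ ∈ Ici t₀, Φ τ τ = 1)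
    (hΦ_deriv : ∀ τ ∈ Ici t₀, ∀ t ∈ Ici t₀,
      HasDerivWithinAt (fun s => Φ s τ) (A t * Φ t τ) (Ici t₀) t)
    (γ lam : ℝ) (hγ : 0 < γ) (hlam : 0 < lam)
    (hUAS : ∀ τ ∈ Ici t₀, ∀ t ∈ Ici τ, ‖Φ t τ‖ ≤ γ * Real.exp (-lam * (t - τ))) :
    ∀ t ∈ Ici t₀,
      IntegrableOn (fun τ => (Φ τ t)ᵀ * Φ τ t) (Ioi t) ∧
      (∫ τ in Ioi t, (Φ τ t)ᵀ * Φ τ t)ᵀ = ∫ τ in Ioi t, (Φ τ t)ᵀ * Φ τ t ∧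
      ∀ x : Fin n → ℝ, x ≠ 0 → 0 < x ⬝ᵥ ((∫ τ in Ioi t, (Φ τ t)ᵀ * Φ τ t) *ᵥ x) := by
  intro t ht
  have hsub : Ioi t ⊆ Ici t₀ := fun s hs => le_trans (Set.mem_Ici.mp ht) (le_of_lt (Set.mem_Ioi.mp hs))
  -- continuity
  have hcontΦ : ContinuousOn (fun τ => Φ τ t) (Ici t₀) := fun s hs =>
    (hΦ_deriv t ht s hs).continuousWithinAt
  have hcontT : ContinuousOn (fun τ => (Φ τ t)ᵀ) (Ici t₀) := by
    have := (transCLM n).continuous.comp_continuousOn hcontΦ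
    simpa [Function.comp_def, transCLM_apply] using this
  have hcontf : ContinuousOn (fun τ => (Φ τ t)ᵀ * Φ τ t) (Ici t₀) := hcontT.mul hcontΦ
  -- integrability
  set C : ℝ := γ ^ 2 * Real.exp (2 * lam * t) with hC
  have hbnd : ∀ s ∈ Ioi t, ‖(Φ s t)ᵀ * Φ s t‖ ≤ C * Real.exp (-(2 * lam) * s) := by
    intro s hs
    have h1 : ‖Φ s t‖ ≤ γ * Real.exp (-lam * (s - t)) := hUAS t ht s (le_of_lt (Set.mem_Ioi.mp hs))
    have h0 : (0:ℝ) ≤ ‖Φ s t‖ := norm_nonneg _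
    have heq : ‖(Φ s t)ᵀ * Φ s t‖ = ‖Φ s t‖ * ‖Φ s t‖ := by
      rw [← Matrix.conjTranspose_eq_transpose_of_trivial,
        Matrix.l2_opNorm_conjTranspose_mul_self]
    rw [heq]
    have key : γ * Real.exp (-lam * (s - t)) * (γ * Real.exp (-lam * (s - t)))
        = C * Real.exp (-(2 * lam) * s) := by
      rw [hC]
      rw [show γ * Real.exp (-lam * (s - t)) * (γ * Real.exp (-lam * (s - t)))
          = γ ^ 2 * (Real.exp (-lam * (s - t)) * Real.exp (-lam * (s - t))) by ring,
        ← Real.exp_add, mul_assoc, ← Real.exp_add]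
      ring_nf
    rw [← key]
    exact mul_le_mul h1 h1 h0 (by positivity)
  have hbndInt : IntegrableOn (fun s => C * Real.exp (-(2 * lam) * s)) (Ioi t) :=
    (exp_neg_integrableOn_Ioi t (by positivity)).const_mul C
  have hmeas : AEStronglyMeasurable (fun τ => (Φ τ t)ᵀ * Φ τ t)
      (volume.restrict (Ioi t)) :=
    (hcontf.mono hsub).aestronglyMeasurable measurableSet_Ioi
  have hInt : IntegrableOn (fun τ => (Φ τ t)ᵀ * Φ τ t) (Ioi t) := by
    refine Integrable.mono' hbndInt hmeas ?_
    filter_upwards [ae_restrict_mem measurableSet_Ioi] with s hs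
    exact hbnd s hs
  refine ⟨hInt, ?_, ?_⟩
  · -- symmetry
    have h1 : (transCLM n) (∫ τ in Ioi t, (Φ τ t)ᵀ * Φ τ t)
        = ∫ τ in Ioi t, (transCLM n) ((Φ τ t)ᵀ * Φ τ t) :=
      ((transCLM n).integral_comp_comm hInt).symm
    rw [transCLM_apply] at h1
    rw [h1]
    refine integral_congr_ae (Filter.Eventually.of_forall fun τ => ?_)
    simp only [transCLM_apply, Matrix.transpose_mul, Matrix.transpose_transpose]
  · -- positive definiteness
    intro x hx
    have hq : (quadCLM x) (∫ τ in Ioi t, (Φ τ t)ᵀ * Φ τ t)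
        = ∫ τ in Ioi t, (quadCLM x) ((Φ τ t)ᵀ * Φ τ t) :=
      ((quadCLM x).integral_comp_comm hInt).symm
    rw [quadCLM_apply] at hq
    rw [hq]
    have hgval : ∀ τ, (quadCLM x) ((Φ τ t)ᵀ * Φ τ t) = (Φ τ t *ᵥ x) ⬝ᵥ (Φ τ t *ᵥ x) := by
      intro τ
      rw [quadCLM_apply, ← Matrix.mulVec_mulVec, Matrix.dotProduct_mulVec,
        Matrix.vecMul_transpose]
    -- apply positivity criterion
    set g : ℝ → ℝ := fun τ => (quadCLM x) ((Φ τ t)ᵀ * Φ τ t) with hg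
    have hgnonneg : ∀ τ, 0 ≤ g τ := fun τ => by
      rw [hg]; simp only [hgval]; exact dot_self_nonneg _
    have hgInt : IntegrableOn g (Ioi t) := (quadCLM x).integrable_comp hInt
    rw [setIntegral_pos_iff_support_of_nonneg_ae
      (Filter.Eventually.of_forall hgnonneg) hgInt]
    -- positive measure of support near t
    have hgcont : ContinuousWithinAt g (Ici t₀) t :=
      ((quadCLM x).continuous.comp_continuousOn hcontf) t ht
    have hgt : 0 < g t := by
      show 0 < (quadCLM x) ((Φ t t)ᵀ * Φ t t)
      rw [hgval t, hΦ_id t ht, Matrix.one_mulVec]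
      rcases Function.ne_iff.mp hx with ⟨i, hi⟩
      exact lt_of_le_of_ne (dot_self_nonneg x)
        (fun h => hi (congrFun (dotProduct_self_eq_zero.mp h.symm) i))
    have hev : ∀ᶠ s in nhdsWithin t (Ici t₀), 0 < g s :=
      hgcont.eventually (eventually_gt_nhds hgt)
    have hev' : ∀ᶠ s in nhdsWithin t (Ioi t), 0 < g s :=
      hev.filter_mono (nhdsWithin_mono t hsub)
    rcases mem_nhdsGT_iff_exists_Ioo_subset.mp hev' with ⟨u, hu, hsubset⟩
    have hIoo : Ioo t u ⊆ Function.support g ∩ Ioi t := fun s hs =>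
      ⟨ne_of_gt (hsubset hs), hs.1⟩
    calc (0:ENNReal) < volume (Ioo t u) := by
          rw [Real.volume_Ioo]; exact ENNReal.ofReal_pos.mpr (sub_pos.mpr hu)
      _ ≤ volume (Function.support g ∩ Ioi t) := measure_mono hIoo
end

section
/- Suppose the system ẋ = A(t)x is uniformly asymptotically stable. Then the matrix function H(t) = ∫_t^∞ Φ(τ,t)ᵀ·Φ(τ,t) dτ is differentiable on [t₀,∞) and satisfies the Lyapunov differential equation Ḣ(t) + A(t)ᵀ·H(t) + H(t)·A(t) = −I for all t ≥ t₀. -/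
open scoped Matrix
open scoped Matrix.Norms.L2Operator  -- `‖·‖` on matrices is the operator norm induced by the Euclidean norm
open Set MeasureTheory

/-- `H(t) = ∫_t^∞ Φ(τ,t)ᵀ Φ(τ,t) dτ`. -/
noncomputable def Hmat {n : ℕ} (Φ : ℝ → ℝ → Matrix (Fin n) (Fin n) ℝ) (t : ℝ) :
    Matrix (Fin n) (Fin n) ℝ :=
  ∫ τ in Ioi t, (Φ τ t)ᵀ * Φ τ t

/-- Forward uniqueness for the linear ODE `x' = A t * x` on `[t₀, ∞)`. -/
lemma lin_unique {n : ℕ} {t₀ b : ℝ} {A : ℝ → Matrix (Fin n) (Fin n) ℝ}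
    (hA : ContinuousOn A (Ici t₀)) {f g : ℝ → Matrix (Fin n) (Fin n) ℝ}
    (hf : ∀ r ∈ Ici t₀, HasDerivWithinAt f (A r * f r) (Ici t₀) r)
    (hg : ∀ r ∈ Ici t₀, HasDerivWithinAt g (A r * g r) (Ici t₀) r)
    (hb : t₀ ≤ b) (h0 : f t₀ = g t₀) : f b = g b := by
  obtain ⟨C, hC⟩ := (isCompact_Icc (a := t₀) (b := b)).exists_bound_of_continuousOn
    (hA.mono Icc_subset_Ici_self)
  set K : NNReal := ⟨max C 0, le_max_right _ _⟩ with hK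
  set v : ℝ → Matrix (Fin n) (Fin n) ℝ → Matrix (Fin n) (Fin n) ℝ :=
    fun r x => A (min (max r t₀) b) * x with hv_def
  have hclamp : ∀ r : ℝ, min (max r t₀) b ∈ Icc t₀ b :=
    fun r => ⟨le_min (le_max_right _ _) hb, min_le_right _ _⟩
  have hv : ∀ r, LipschitzOnWith K (v r) univ := by
    intro r
    refine LipschitzWith.lipschitzOnWith ?_
    refine LipschitzWith.of_dist_le_mul (fun x y => ?_)
    rw [dist_eq_norm, dist_eq_norm, hv_def]
    simp only
    rw [← mul_sub]
    calc ‖A (min (max r t₀) b) * (x - y)‖ ≤ ‖A (min (max r t₀) b)‖ * ‖x - y‖ := norm_mul_le _ _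
      _ ≤ (K : ℝ) * ‖x - y‖ := by
          apply mul_le_mul_of_nonneg_right _ (norm_nonneg _)
          exact (hC _ (hclamp r)).trans (le_max_left _ _)
  have hfc0 : ContinuousOn f (Ici t₀) := fun r hr => (hf r hr).continuousWithinAt
  have hgc0 : ContinuousOn g (Ici t₀) := fun r hr => (hg r hr).continuousWithinAt
  have hfc : ContinuousOn f (Icc t₀ b) := hfc0.mono Icc_subset_Ici_self
  have hgc : ContinuousOn g (Icc t₀ b) := hgc0.mono Icc_subset_Ici_self
  have key : ∀ (h : ℝ → Matrix (Fin n) (Fin n) ℝ),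
      (∀ r ∈ Ici t₀, HasDerivWithinAt h (A r * h r) (Ici t₀) r) →
      ∀ r ∈ Ico t₀ b, HasDerivWithinAt h (v r (h r)) (Ici r) r := by
    intro h hh r hr
    have hcl : min (max r t₀) b = r := by
      rw [max_eq_left hr.1, min_eq_left hr.2.le]
    rw [hv_def]
    simp only [hcl]
    exact (hh r hr.1).mono (Ici_subset_Ici.mpr hr.1)
  have := ODE_solution_unique_of_mem_Icc_right (v := v)
    (s := fun _ => (univ : Set (Matrix (Fin n) (Fin n) ℝ))) (fun r _ => hv r)
    hfc (key f hf) (fun _ _ => mem_univ _) hgc (key g hg) (fun _ _ => mem_univ _) h0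
  exact this ⟨hb, le_rfl⟩

/-- for a uniformly asymptotically stable system, `H` is differentiable on
`[t₀,∞)` and satisfies the Lyapunov differential equation
`Ḣ(t) + A(t)ᵀ H(t) + H(t) A(t) = −I`, i.e. `Ḣ(t) = −I − A(t)ᵀ H(t) − H(t) A(t)`. -/
theorem stmt8 {n : ℕ} (t₀ : ℝ) (A : ℝ → Matrix (Fin n) (Fin n) ℝ)
    (hA : ContinuousOn A (Ici t₀))
    (Φ : ℝ → ℝ → Matrix (Fin n) (Fin n) ℝ)
    (hΦ_id : ∀ τ ∈ Ici t₀, Φ τ τ = 1)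
    (hΦ_deriv : ∀ τ ∈ Ici t₀, ∀ t ∈ Ici t₀,
      HasDerivWithinAt (fun s => Φ s τ) (A t * Φ t τ) (Ici t₀) t)
    (γ lam : ℝ) (hγ : 0 < γ) (hlam : 0 < lam)
    (hUAS : ∀ τ ∈ Ici t₀, ∀ t ∈ Ici τ, ‖Φ t τ‖ ≤ γ * Real.exp (-lam * (t - τ))) :
    ∀ t ∈ Ici t₀,
      HasDerivWithinAt (Hmat Φ)
        (-(1 : Matrix (Fin n) (Fin n) ℝ) - (A t)ᵀ * Hmat Φ t - Hmat Φ t * A t)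
        (Ici t₀) t := by
  intro t ht
  -- the fundamental solution based at `t₀`
  have hψd : ∀ r ∈ Ici t₀, HasDerivWithinAt (fun s => Φ s t₀) (A r * Φ r t₀) (Ici t₀) r :=
    fun r hr => hΦ_deriv t₀ self_mem_Ici r hr
  have hψc : ContinuousOn (fun s => Φ s t₀) (Ici t₀) :=
    fun r hr => (hψd r hr).continuousWithinAt
  -- cocycle property
  have hcoc : ∀ u ∈ Ici t₀, ∀ s ∈ Ici t₀, Φ s t₀ * Φ t₀ u = Φ s u := by
    intro u hu s hs
    have hf : ∀ r ∈ Ici t₀,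
        HasDerivWithinAt (fun r => Φ r t₀ * Φ t₀ u) (A r * (Φ r t₀ * Φ t₀ u)) (Ici t₀) r := by
      intro r hr
      have := (hψd r hr).mul_const (Φ t₀ u)
      rwa [mul_assoc] at this
    have h0 : Φ t₀ t₀ * Φ t₀ u = Φ t₀ u := by rw [hΦ_id t₀ self_mem_Ici, one_mul]
    exact lin_unique hA hf (fun r hr => hΦ_deriv u hu r hr) hs h0
  have hinv1 : ∀ u ∈ Ici t₀, Φ u t₀ * Φ t₀ u = 1 := fun u hu => by
    rw [hcoc u hu u hu, hΦ_id u hu]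
  have hinv2 : ∀ u ∈ Ici t₀, Φ t₀ u * Φ u t₀ = 1 := fun u hu =>
    mul_eq_one_comm.mp (hinv1 u hu)
  -- transpose as a continuous linear map
  set Tr : Matrix (Fin n) (Fin n) ℝ →L[ℝ] Matrix (Fin n) (Fin n) ℝ :=
    LinearMap.toContinuousLinearMap
      (Matrix.transposeLinearEquiv (Fin n) (Fin n) ℝ ℝ).toLinearMap with hTr_def
  have hTr_apply : ∀ M : Matrix (Fin n) (Fin n) ℝ, Tr M = Mᵀ := fun M => rfl
  -- the integrand based at `t₀`
  set F : ℝ → Matrix (Fin n) (Fin n) ℝ := fun τ => (Φ τ t₀)ᵀ * Φ τ t₀ with hF_def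
  have hFc : ContinuousOn F (Ici t₀) := by
    have : ContinuousOn (fun τ => (Φ τ t₀)ᵀ) (Ici t₀) := Tr.continuous.comp_continuousOn hψc
    exact this.mul hψc
  have hFnorm : ∀ τ ∈ Ici t₀, ‖F τ‖ ≤ (γ ^ 2 * Real.exp (2 * lam * t₀)) *
      Real.exp (-(2 * lam) * τ) := by
    intro τ hτ
    have h1 : ‖F τ‖ = ‖Φ τ t₀‖ * ‖Φ τ t₀‖ := by
      rw [hF_def]
      simp only
      rw [← Matrix.conjTranspose_eq_transpose_of_trivial]
      exact Matrix.l2_opNorm_conjTranspose_mul_self _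
    have h2 : ‖Φ τ t₀‖ ≤ γ * Real.exp (-lam * (τ - t₀)) := hUAS t₀ self_mem_Ici τ hτ
    have h3 : (0:ℝ) ≤ γ * Real.exp (-lam * (τ - t₀)) := by positivity
    calc ‖F τ‖ = ‖Φ τ t₀‖ * ‖Φ τ t₀‖ := h1
      _ ≤ (γ * Real.exp (-lam * (τ - t₀))) * (γ * Real.exp (-lam * (τ - t₀))) :=
          mul_le_mul h2 h2 (norm_nonneg _) h3
      _ = (γ ^ 2 * Real.exp (2 * lam * t₀)) * Real.exp (-(2 * lam) * τ) := by
          have e1 : γ * Real.exp (-lam * (τ - t₀)) * (γ * Real.exp (-lam * (τ - t₀)))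
              = γ ^ 2 * Real.exp ((-lam * (τ - t₀)) + (-lam * (τ - t₀))) := by
            rw [Real.exp_add]; ring
          have e2 : γ ^ 2 * Real.exp (2 * lam * t₀) * Real.exp (-(2 * lam) * τ)
              = γ ^ 2 * Real.exp ((2 * lam * t₀) + (-(2 * lam) * τ)) := by
            rw [Real.exp_add]; ring
          rw [e1, e2]
          congr 2
          ring
  have hFmeas : AEStronglyMeasurable F (volume.restrict (Ioi t₀)) :=
    (hFc.mono Ioi_subset_Ici_self).aestronglyMeasurable measurableSet_Ioi
  have hFi : ∀ a ∈ Ici t₀, IntegrableOn F (Ioi a) := by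
    intro a ha
    have hexp : IntegrableOn
        (fun τ => (γ ^ 2 * Real.exp (2 * lam * t₀)) * Real.exp (-(2 * lam) * τ)) (Ioi a) :=
      (exp_neg_integrableOn_Ioi a (by positivity : (0:ℝ) < 2 * lam)).const_mul _
    refine Integrable.mono' hexp
      (hFmeas.mono_set (Ioi_subset_Ioi ha)) ?_
    filter_upwards [ae_restrict_mem measurableSet_Ioi] with τ hτ
    exact hFnorm τ (mem_Ici.mpr (le_of_lt (lt_of_le_of_lt (mem_Ici.mp ha) (mem_Ioi.mp hτ))))
  set G : ℝ → Matrix (Fin n) (Fin n) ℝ := fun a => ∫ τ in Ioi a, F τ with hG_def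
  -- H in terms of G
  have hH : ∀ u ∈ Ici t₀, Hmat Φ u = (Φ t₀ u)ᵀ * G u * Φ t₀ u := by
    intro u hu
    set L : Matrix (Fin n) (Fin n) ℝ →L[ℝ] Matrix (Fin n) (Fin n) ℝ :=
      ContinuousLinearMap.mulLeftRight ℝ _ (Φ t₀ u)ᵀ (Φ t₀ u) with hL_def
    have hLapp : ∀ M, L M = (Φ t₀ u)ᵀ * M * Φ t₀ u := fun M =>
      ContinuousLinearMap.mulLeftRight_apply ℝ _ _ _ _
    have h1 : Hmat Φ u = ∫ τ in Ioi u, L (F τ) := by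
      rw [Hmat]
      refine setIntegral_congr_fun measurableSet_Ioi (fun τ hτ => ?_)
      have hτ' : τ ∈ Ici t₀ := mem_Ici.mpr (le_of_lt (lt_of_le_of_lt (mem_Ici.mp hu) (mem_Ioi.mp hτ)))
      rw [hLapp, hF_def]
      simp only
      rw [← hcoc u hu τ hτ', Matrix.transpose_mul]
      noncomm_ring
    rw [h1, ContinuousLinearMap.integral_comp_comm L (hFi u hu), hLapp]
  -- derivative of G
  have hGd : HasDerivWithinAt G (-(F t)) (Ici t₀) t := by
    have hIIa : ∀ a ∈ Ici t₀, IntervalIntegrable F volume t₀ a := by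
      intro a ha
      rw [intervalIntegrable_iff_integrableOn_Ioc_of_le ha]
      exact (hFi t₀ self_mem_Ici).mono_set Ioc_subset_Ioi_self
    have hGsplit : ∀ a ∈ Ici t₀, G a = G t₀ - ∫ τ in t₀..a, F τ := by
      intro a ha
      have hsplit : G t₀ = (∫ τ in Ioc t₀ a, F τ) + G a := by
        rw [hG_def]
        simp only
        rw [← setIntegral_union (Ioc_disjoint_Ioi le_rfl) measurableSet_Ioi
          ((hFi t₀ self_mem_Ici).mono_set Ioc_subset_Ioi_self) (hFi a ha),
          Ioc_union_Ioi_eq_Ioi ha]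
      rw [intervalIntegral.integral_of_le ha]
      rw [hsplit]
      abel
    have hFTC : HasDerivWithinAt (fun a => ∫ τ in t₀..a, F τ) (F t) (Ici t₀) t := by
      rcases eq_or_lt_of_le (mem_Ici.mp ht) with rfl | ht'
      · exact intervalIntegral.integral_hasDerivWithinAt_right (hIIa t₀ self_mem_Ici)
          ⟨Ioi t₀, self_mem_nhdsWithin, hFmeas⟩
          ((hFc t₀ self_mem_Ici).mono Ioi_subset_Ici_self)
      · refine (intervalIntegral.integral_hasDerivAt_right (hIIa t ht)
          ⟨Ioi t₀, Ioi_mem_nhds ht', hFmeas⟩ ?_).hasDerivWithinAt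
        exact (hFc.mono Ioi_subset_Ici_self).continuousAt (Ioi_mem_nhds ht')
    have := (hasDerivWithinAt_const t (Ici t₀) (G t₀)).sub hFTC
    rw [zero_sub] at this
    exact this.congr (fun y hy => hGsplit y hy) (hGsplit t ht)
  -- derivative of the inverse
  have hBd : HasDerivWithinAt (fun u => Φ t₀ u) (-(Φ t₀ t * A t)) (Ici t₀) t := by
    set U : (Matrix (Fin n) (Fin n) ℝ)ˣ :=
      ⟨Φ t t₀, Φ t₀ t, hinv1 t ht, hinv2 t ht⟩ with hU_def
    have hRinv : HasFDerivAt Ring.inverse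
        (-ContinuousLinearMap.mulLeftRight ℝ _ (Φ t₀ t) (Φ t₀ t)) (Φ t t₀) :=
      hasFDerivAt_ringInverse U
    have h1 : HasDerivWithinAt (fun u => Ring.inverse (Φ u t₀))
        ((-ContinuousLinearMap.mulLeftRight ℝ _ (Φ t₀ t) (Φ t₀ t)) (A t * Φ t t₀))
        (Ici t₀) t :=
      by have := hRinv.comp_hasDerivWithinAt t (hψd t ht); exact this
    have happ : (-ContinuousLinearMap.mulLeftRight ℝ _ (Φ t₀ t) (Φ t₀ t)) (A t * Φ t t₀)
        = -(Φ t₀ t * A t) := by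
      rw [ContinuousLinearMap.neg_apply, ContinuousLinearMap.mulLeftRight_apply]
      have : Φ t₀ t * (A t * Φ t t₀) * Φ t₀ t = Φ t₀ t * A t * (Φ t t₀ * Φ t₀ t) := by
        noncomm_ring
      rw [this, hinv1 t ht, mul_one]
    rw [happ] at h1
    refine h1.congr (fun y hy => ?_) ?_
    · exact (Ring.inverse_unit ⟨Φ y t₀, Φ t₀ y, hinv1 y hy, hinv2 y hy⟩).symm
    · exact (Ring.inverse_unit U).symm
  -- transpose derivative
  have hBTd : HasDerivWithinAt (fun u => (Φ t₀ u)ᵀ) (-(Φ t₀ t * A t))ᵀ (Ici t₀) t :=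
    Tr.hasFDerivAt.comp_hasDerivWithinAt t hBd
  -- assemble
  have hprod := (hBTd.mul hGd).mul hBd
  refine (hprod.congr (fun y hy => hH y hy) (hH t ht)).congr_deriv ?_
  -- algebra
  have h1 : Φ t t₀ * Φ t₀ t = 1 := hinv1 t ht
  have h1T : (Φ t₀ t)ᵀ * (Φ t t₀)ᵀ = 1 := by
    rw [← Matrix.transpose_mul, h1, Matrix.transpose_one]
  have key : (Φ t₀ t)ᵀ * F t * Φ t₀ t = 1 := by
    rw [hF_def]
    simp only
    calc (Φ t₀ t)ᵀ * ((Φ t t₀)ᵀ * Φ t t₀) * Φ t₀ t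
        = ((Φ t₀ t)ᵀ * (Φ t t₀)ᵀ) * (Φ t t₀ * Φ t₀ t) := by noncomm_ring
      _ = 1 := by rw [h1, h1T, one_mul]
  rw [hH t ht]
  rw [Matrix.transpose_neg, Matrix.transpose_mul]
  simp only [Pi.mul_apply]
  have expand : (-( (A t)ᵀ * (Φ t₀ t)ᵀ) * G t + (Φ t₀ t)ᵀ * -F t) * Φ t₀ t +
      (Φ t₀ t)ᵀ * G t * -(Φ t₀ t * A t)
      = -((A t)ᵀ * ((Φ t₀ t)ᵀ * G t * Φ t₀ t)) - ((Φ t₀ t)ᵀ * F t * Φ t₀ t)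
        - ((Φ t₀ t)ᵀ * G t * Φ t₀ t) * A t := by noncomm_ring
  rw [expand, key]
  noncomm_ring
end

section
/- Suppose the system ẋ = A(t)x is uniformly asymptotically stable and let x be a solution. Then the scalar function t ↦ x(t)ᵀ·H(t)·x(t) is differentiable and satisfies d/dt ( x(t)ᵀ·H(t)·x(t) ) = −‖x(t)‖_I² for all t ≥ t₀, where H(t) = ∫_t^∞ Φ(τ,t)ᵀ·Φ(τ,t) dτ. -/
open scoped Matrix
open scoped Matrix.Norms.L2Operator  -- `‖·‖` on matrices is the operator norm induced by the Euclidean norm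
open Set MeasureTheory

set_option maxHeartbeats 1000000

variable {n : ℕ}

/-- `M ↦ M *ᵥ v` as a continuous linear map. -/
noncomputable def mvCLM (v : Fin n → ℝ) : Matrix (Fin n) (Fin n) ℝ →L[ℝ] (Fin n → ℝ) :=
  LinearMap.toContinuousLinearMap
  { toFun := fun M => M *ᵥ v
    map_add' := fun M N => Matrix.add_mulVec M N v
    map_smul' := fun c M => M.smul_mulVec c v }

@[simp] lemma mvCLM_apply (v : Fin n → ℝ) (M : Matrix (Fin n) (Fin n) ℝ) :
    mvCLM v M = M *ᵥ v := rfl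

/-- `M ↦ v ⬝ᵥ (M *ᵥ v)` as a continuous linear map. -/
noncomputable def qCLM (v : Fin n → ℝ) : Matrix (Fin n) (Fin n) ℝ →L[ℝ] ℝ :=
  LinearMap.toContinuousLinearMap
  { toFun := fun M => v ⬝ᵥ (M *ᵥ v)
    map_add' := by intro M N; simp [Matrix.add_mulVec]
    map_smul' := by intro c M; simp [Matrix.smul_mulVec] }

@[simp] lemma qCLM_apply (v : Fin n → ℝ) (M : Matrix (Fin n) (Fin n) ℝ) :
    qCLM v M = v ⬝ᵥ (M *ᵥ v) := rfl

/-- `M ↦ (M *ᵥ ·)` as a linear map into continuous linear maps. -/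
noncomputable def matLM :
    Matrix (Fin n) (Fin n) ℝ →ₗ[ℝ] ((Fin n → ℝ) →L[ℝ] (Fin n → ℝ)) :=
  (LinearMap.toContinuousLinearMap :
      ((Fin n → ℝ) →ₗ[ℝ] (Fin n → ℝ)) ≃ₗ[ℝ] _).toLinearMap.comp
    (Matrix.toLin' : Matrix (Fin n) (Fin n) ℝ ≃ₗ[ℝ] _).toLinearMap

@[simp] lemma matLM_apply (M : Matrix (Fin n) (Fin n) ℝ) (v : Fin n → ℝ) :
    matLM M v = M *ᵥ v := by
  simp [matLM, Matrix.toLin'_apply]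

lemma propagate (t₀ : ℝ) (A : ℝ → Matrix (Fin n) (Fin n) ℝ)
    (hA : ContinuousOn A (Ici t₀))
    (Φ : ℝ → ℝ → Matrix (Fin n) (Fin n) ℝ)
    (hΦ_id : ∀ τ ∈ Ici t₀, Φ τ τ = 1)
    (hΦ_deriv : ∀ τ ∈ Ici t₀, ∀ t ∈ Ici t₀,
      HasDerivWithinAt (fun s => Φ s τ) (A t * Φ t τ) (Ici t₀) t)
    (x : ℝ → Fin n → ℝ)
    (hx : ∀ t ∈ Ici t₀, HasDerivWithinAt x (A t *ᵥ x t) (Ici t₀) t) :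
    ∀ s ∈ Ici t₀, ∀ τ ∈ Ici s, Φ τ s *ᵥ x s = x τ := by
  intro s hs τ hτ
  have hsτ : s ≤ τ := hτ
  set f : ℝ → Fin n → ℝ := fun u => Φ u s *ᵥ x s with hf_def
  -- clamp function
  set c : ℝ → ℝ := fun u => max s (min u τ) with hc_def
  have hc_mem : ∀ u, c u ∈ Icc s τ := fun u =>
    ⟨le_max_left _ _, max_le hsτ (min_le_right _ _)⟩
  have hc_eq : ∀ u ∈ Icc s τ, c u = u := by
    intro u hu
    simp [hc_def, min_eq_left hu.2, max_eq_right hu.1]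
  -- bound on operator norms
  have hcontN : ContinuousOn (fun u => ‖matLM (n := n) (A u)‖) (Icc s τ) := by
    have h1 : Continuous (matLM (n := n)) := matLM.continuous_of_finiteDimensional
    exact (h1.comp_continuousOn (hA.mono (Icc_subset_Ici_self.trans (Ici_subset_Ici.2 hs)))).norm
  obtain ⟨C, hC⟩ := (isCompact_Icc (a := s) (b := τ)).exists_bound_of_continuousOn hcontN
  set K : NNReal := Real.toNNReal C with hK_def
  set v : ℝ → (Fin n → ℝ) → (Fin n → ℝ) := fun u y => A (c u) *ᵥ y with hv_def
  have hLip : ∀ u, LipschitzOnWith K (v u) univ := by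
    intro u
    have h1 : LipschitzWith ‖matLM (n := n) (A (c u))‖₊ (matLM (A (c u))) :=
      (matLM (A (c u))).lipschitz
    have h2 : ‖matLM (n := n) (A (c u))‖₊ ≤ K := by
      rw [hK_def, ← norm_toNNReal]
      have := hC _ (hc_mem u)
      rw [norm_norm] at this
      exact Real.toNNReal_mono this
    have h3 : LipschitzWith K (matLM (A (c u))) := h1.weaken h2
    have h4 : (matLM (A (c u)) : (Fin n → ℝ) → (Fin n → ℝ)) = v u := by
      funext y; simp [hv_def]
    rw [← h4]
    exact h3.lipschitzOnWith
  have hIci : Icc s τ ⊆ Ici t₀ := Icc_subset_Ici_self.trans (Ici_subset_Ici.2 hs)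
  have hΦcont : ContinuousOn (fun u => Φ u s) (Ici t₀) := fun u hu =>
    (hΦ_deriv s hs u hu).continuousWithinAt
  have hxcont : ContinuousOn x (Ici t₀) := fun u hu => (hx u hu).continuousWithinAt
  have hfcont : ContinuousOn f (Icc s τ) := by
    have : ContinuousOn (fun u => mvCLM (x s) (Φ u s)) (Icc s τ) :=
      (mvCLM (x s)).continuous.comp_continuousOn (hΦcont.mono hIci)
    simpa [hf_def] using this
  have hf' : ∀ u ∈ Ico s τ, HasDerivWithinAt f (v u (f u)) (Ici u) u := by
    intro u hu
    have hu' : u ∈ Ici t₀ := hIci ⟨hu.1, hu.2.le⟩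
    have h1 : HasDerivWithinAt (fun w => Φ w s) (A u * Φ u s) (Ici u) u :=
      (hΦ_deriv s hs u hu').mono (Ici_subset_Ici.2 hu')
    have h2 : HasDerivWithinAt (fun w => mvCLM (x s) (Φ w s))
        (mvCLM (x s) (A u * Φ u s)) (Ici u) u :=
      (mvCLM (x s)).hasFDerivAt.comp_hasDerivWithinAt u h1
    have h3 : mvCLM (x s) (A u * Φ u s) = v u (f u) := by
      simp [hv_def, hf_def, hc_eq u ⟨hu.1, hu.2.le⟩, Matrix.mulVec_mulVec]
    rw [h3] at h2
    simpa [hf_def] using h2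
  have hg' : ∀ u ∈ Ico s τ, HasDerivWithinAt x (v u (x u)) (Ici u) u := by
    intro u hu
    have hu' : u ∈ Ici t₀ := hIci ⟨hu.1, hu.2.le⟩
    have := (hx u hu').mono (Ici_subset_Ici.2 hu')
    rwa [show v u (x u) = A u *ᵥ x u by simp [hv_def, hc_eq u ⟨hu.1, hu.2.le⟩]]
  have ha : f s = x s := by simp [hf_def, hΦ_id s hs, Matrix.one_mulVec]
  have := ODE_solution_unique_of_mem_Icc_right (v := v) (s := fun _ => univ)
    (K := K) (f := f) (g := x) (a := s) (b := τ)
    (fun u _ => hLip u) hfcont hf' (fun _ _ => mem_univ _)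
    (hxcont.mono hIci) hg' (fun _ _ => mem_univ _) ha
  exact this (right_mem_Icc.2 hsτ)

/-- The Euclidean norm on `ℝⁿ` (denoted `‖·‖_I` in the paper). -/
noncomputable def euclNorm {n : ℕ} (x : Fin n → ℝ) : ℝ :=
  Real.sqrt (x ⬝ᵥ x)

/-- for a uniformly asymptotically stable system and a solution `x`,
`d/dt (x(t)ᵀ H(t) x(t)) = −‖x(t)‖²` for all `t ≥ t₀`. -/
theorem stmt9 {n : ℕ} (t₀ : ℝ) (A : ℝ → Matrix (Fin n) (Fin n) ℝ)
    (hA : ContinuousOn A (Ici t₀))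
    (Φ : ℝ → ℝ → Matrix (Fin n) (Fin n) ℝ)
    (hΦ_id : ∀ τ ∈ Ici t₀, Φ τ τ = 1)
    (hΦ_deriv : ∀ τ ∈ Ici t₀, ∀ t ∈ Ici t₀,
      HasDerivWithinAt (fun s => Φ s τ) (A t * Φ t τ) (Ici t₀) t)
    (γ lam : ℝ) (hγ : 0 < γ) (hlam : 0 < lam)
    (hUAS : ∀ τ ∈ Ici t₀, ∀ t ∈ Ici τ, ‖Φ t τ‖ ≤ γ * Real.exp (-lam * (t - τ)))
    (x : ℝ → Fin n → ℝ)
    (hx : ∀ t ∈ Ici t₀, HasDerivWithinAt x (A t *ᵥ x t) (Ici t₀) t) :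
    ∀ t ∈ Ici t₀,
      HasDerivWithinAt (fun s => x s ⬝ᵥ (Hmat Φ s *ᵥ x s))
        (-(euclNorm (x t)) ^ 2) (Ici t₀) t := by
  have hxcont : ContinuousOn x (Ici t₀) := fun u hu => (hx u hu).continuousWithinAt
  have hΦcont : ∀ s ∈ Ici t₀, ContinuousOn (fun u => Φ u s) (Ici t₀) :=
    fun s hs u hu => (hΦ_deriv s hs u hu).continuousWithinAt
  have hprop := propagate t₀ A hA Φ hΦ_id hΦ_deriv x hx
  set g : ℝ → ℝ := fun τ => x τ ⬝ᵥ x τ with hg_def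
  -- integrability of the matrix integrand
  have hInt : ∀ s ∈ Ici t₀, IntegrableOn (fun τ => (Φ τ s)ᵀ * Φ τ s) (Ioi s) := by
    intro s hs
    have hsub : Ioi s ⊆ Ici t₀ := fun u hu => mem_Ici.mpr (le_trans (mem_Ici.mp hs) (le_of_lt (mem_Ioi.mp hu)))
    have hmeas : AEStronglyMeasurable (fun τ => (Φ τ s)ᵀ * Φ τ s)
        (volume.restrict (Ioi s)) := by
      have hc : ContinuousOn (fun τ => (Φ τ s)ᵀ * Φ τ s) (Ici t₀) :=
        ((continuous_id.matrix_transpose).matrix_mul continuous_id).comp_continuousOn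
          (hΦcont s hs)
      exact (hc.mono hsub).aestronglyMeasurable measurableSet_Ioi
    have hdom : IntegrableOn (fun τ => (γ ^ 2 * Real.exp (2 * lam * s)) *
        Real.exp (-(2 * lam) * τ)) (Ioi s) :=
      (exp_neg_integrableOn_Ioi s (by positivity)).const_mul _
    refine Integrable.mono' hdom hmeas ?_
    filter_upwards [ae_restrict_mem measurableSet_Ioi] with τ hτ
    have hτ' : τ ∈ Ici s := mem_Ici.mpr (le_of_lt hτ)
    have hb := hUAS s hs τ hτ'
    have h1 : ‖(Φ τ s)ᵀ * Φ τ s‖ = ‖Φ τ s‖ * ‖Φ τ s‖ := by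
      rw [← Matrix.conjTranspose_eq_transpose_of_trivial]
      exact Matrix.l2_opNorm_conjTranspose_mul_self _
    rw [h1]
    have hnn : (0 : ℝ) ≤ ‖Φ τ s‖ := norm_nonneg _
    calc ‖Φ τ s‖ * ‖Φ τ s‖
        ≤ (γ * Real.exp (-lam * (τ - s))) * (γ * Real.exp (-lam * (τ - s))) :=
          mul_le_mul hb hb hnn (by positivity)
      _ = γ ^ 2 * Real.exp (-lam * (τ - s) + -lam * (τ - s)) := by
          rw [Real.exp_add]; ring
      _ = γ ^ 2 * (Real.exp (2 * lam * s) * Real.exp (-(2 * lam) * τ)) := by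
          rw [← Real.exp_add]; ring_nf
      _ = (γ ^ 2 * Real.exp (2 * lam * s)) * Real.exp (-(2 * lam) * τ) := by ring
  -- pointwise identity
  have hpt : ∀ s ∈ Ici t₀, ∀ τ ∈ Ioi s,
      qCLM (x s) ((Φ τ s)ᵀ * Φ τ s) = g τ := by
    intro s hs τ hτ
    have hx2 : Φ τ s *ᵥ x s = x τ := hprop s hs τ (mem_Ici.mpr (le_of_lt hτ))
    rw [qCLM_apply, hg_def]
    calc x s ⬝ᵥ (((Φ τ s)ᵀ * Φ τ s) *ᵥ x s)
        = x s ⬝ᵥ ((Φ τ s)ᵀ *ᵥ (Φ τ s *ᵥ x s)) := by rw [Matrix.mulVec_mulVec]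
      _ = ((Φ τ s *ᵥ x s) ᵥ* Φ τ s) ⬝ᵥ x s := by
          rw [Matrix.mulVec_transpose, dotProduct_comm]
      _ = (Φ τ s *ᵥ x s) ⬝ᵥ (Φ τ s *ᵥ x s) := by rw [← Matrix.dotProduct_mulVec]
      _ = x τ ⬝ᵥ x τ := by rw [hx2]
  -- key value equality
  have hval : ∀ s ∈ Ici t₀, x s ⬝ᵥ (Hmat Φ s *ᵥ x s) = ∫ τ in Ioi s, g τ := by
    intro s hs
    rw [← qCLM_apply, Hmat, ← ContinuousLinearMap.integral_comp_comm _ (hInt s hs)]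
    exact setIntegral_congr_fun measurableSet_Ioi (fun τ hτ => hpt s hs τ hτ)
  -- integrability and continuity of g
  have hgInt : IntegrableOn g (Ioi t₀) := by
    have h0 := (qCLM (x t₀)).integrable_comp (hInt t₀ Set.self_mem_Ici)
    refine h0.congr ?_
    filter_upwards [ae_restrict_mem measurableSet_Ioi] with τ hτ
    exact hpt t₀ Set.self_mem_Ici τ hτ
  have hgcont : ContinuousOn g (Ici t₀) :=
    (continuous_id.dotProduct continuous_id).comp_continuousOn hxcont
  intro t ht
  -- decomposition of the tail integral
  have hIoc : ∀ s ∈ Ici t₀, (∫ τ in Ioi s, g τ) =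
      (∫ τ in Ioi t₀, g τ) - ∫ τ in t₀..s, g τ := by
    intro s hs
    rw [intervalIntegral.integral_of_le hs, eq_sub_iff_add_eq, add_comm]
    rw [← setIntegral_union (Ioc_disjoint_Ioi le_rfl) measurableSet_Ioi
      (hgInt.mono_set Ioc_subset_Ioi_self) (hgInt.mono_set (Ioi_subset_Ioi hs)),
      Ioc_union_Ioi_eq_Ioi hs]
  -- FTC
  have hii : IntervalIntegrable g volume t₀ t := by
    rw [intervalIntegrable_iff_integrableOn_Ioc_of_le ht]
    exact hgInt.mono_set Ioc_subset_Ioi_self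
  have hF : HasDerivWithinAt
      (fun s => (∫ τ in Ioi t₀, g τ) - ∫ τ in t₀..s, g τ) (-(g t)) (Ici t₀) t := by
    rcases eq_or_lt_of_le (mem_Ici.mp ht) with rfl | hlt
    · have hmeas : StronglyMeasurableAtFilter g (nhdsWithin t₀ (Ioi t₀)) :=
        ⟨Ioi t₀, self_mem_nhdsWithin,
          (hgcont.mono (fun u hu => mem_Ici.mpr (le_of_lt hu))).aestronglyMeasurable measurableSet_Ioi⟩
      have hcont : ContinuousWithinAt g (Ioi t₀) t₀ :=
        (hgcont t₀ ht).mono (fun u hu => mem_Ici.mpr (le_of_lt hu))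
      have := intervalIntegral.integral_hasDerivWithinAt_right (s := Ici t₀) (t := Ioi t₀)
        hii hmeas hcont
      simpa using this.const_sub _
    · have hmem : Ici t₀ ∈ nhds t := Ici_mem_nhds hlt
      have hmeas : StronglyMeasurableAtFilter g (nhds t) :=
        ⟨Ici t₀, hmem, hgcont.aestronglyMeasurable measurableSet_Ici⟩
      have hcont : ContinuousAt g t := (hgcont t ht).continuousAt hmem
      have := (intervalIntegral.integral_hasDerivAt_right hii hmeas hcont).hasDerivWithinAt
        (s := Ici t₀)
      simpa using this.const_sub _
  have hmain : HasDerivWithinAt (fun s => x s ⬝ᵥ (Hmat Φ s *ᵥ x s)) (-(g t)) (Ici t₀) t := by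
    refine hF.congr (fun y hy => ?_) ?_
    · exact (hval y hy).trans (hIoc y hy)
    · exact (hval t ht).trans (hIoc t ht)
  have hnn : (0 : ℝ) ≤ x t ⬝ᵥ x t :=
    Finset.sum_nonneg fun i _ => mul_self_nonneg _
  have heq : (euclNorm (x t)) ^ 2 = g t := by
    rw [euclNorm, Real.sq_sqrt hnn]
  rw [← heq] at hmain
  exact hmain
end
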